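/- arXiv:2210.01698 — 2 statements merged into one kernel-verified Lean document; each statement's English description precedes it below -/
import Mathlib

section
/- Define J : ℝ → ℝ by J(s) = 6s² + 20s + 17 for s ≤ −2, J(s) = (s+1)⁴ for −2 < s < −1, J(s) = 0 for −1 ≤ s ≤ 1, J(s) = (s−1)⁴ for 1 < s < 2, and J(s) = 6s² − 20s + 17 for s ≥ 2. Then J is twice continuously differentiable on ℝ, nonnegative, convex, vanishes exactly on the interval [−1, 1], and its second derivative satisfies 0 ≤ J''(s) ≤ 12 for all s ∈ ℝ. -/
open Set Filter

/-- The piecewise-defined obstacle approximation function `J`. -/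
noncomputable def obstacleApprox (s : ℝ) : ℝ :=
  if s ≤ -2 then 6 * s ^ 2 + 20 * s + 17
  else if s < -1 then (s + 1) ^ 4
  else if s ≤ 1 then 0
  else if s < 2 then (s - 1) ^ 4
  else 6 * s ^ 2 - 20 * s + 17

/-- First derivative of `obstacleApprox`. -/
noncomputable def obstacleApprox' (s : ℝ) : ℝ :=
  if s ≤ -2 then 12 * s + 20
  else if s < -1 then 4 * (s + 1) ^ 3
  else if s ≤ 1 then 0
  else if s < 2 then 4 * (s - 1) ^ 3
  else 12 * s - 20

/-- Second derivative of `obstacleApprox`. -/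
noncomputable def obstacleApprox'' (s : ℝ) : ℝ :=
  if s ≤ -2 then 12
  else if s < -1 then 12 * (s + 1) ^ 2
  else if s ≤ 1 then 0
  else if s < 2 then 12 * (s - 1) ^ 2
  else 12

private lemma loc {f p : ℝ → ℝ} {a b c d : ℝ} (hb : b < a) (hc : a < c)
    (hp : HasDerivAt p d a) (hfp : ∀ x ∈ Set.Ioo b c, f x = p x) : HasDerivAt f d a := by
  apply hp.congr_of_eventuallyEq
  filter_upwards [Ioo_mem_nhds hb hc] with x hx using hfp x hx

private lemma glue {f p q : ℝ → ℝ} {a b c d : ℝ} (hb : b < a) (hc : a < c)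
    (hp : HasDerivAt p d a) (hq : HasDerivAt q d a)
    (hfp : ∀ x ∈ Set.Ioo b a, f x = p x) (hfq : ∀ x ∈ Set.Ioo a c, f x = q x)
    (hfa : f a = p a) (hfa' : f a = q a) : HasDerivAt f d a := by
  have h1 : HasDerivWithinAt f d (Iio a) a := by
    apply hp.hasDerivWithinAt.congr_of_eventuallyEq _ hfa
    filter_upwards [inter_mem_nhdsWithin (Iio a) (Ioo_mem_nhds hb hc)] with x hx
    exact hfp x ⟨hx.2.1, hx.1⟩
  have h2 : HasDerivWithinAt f d (Ici a) a := by
    apply hq.hasDerivWithinAt.congr_of_eventuallyEq _ hfa'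
    filter_upwards [inter_mem_nhdsWithin (Ici a) (Ioo_mem_nhds hb hc)] with x hx
    rcases eq_or_lt_of_le (mem_Ici.mp hx.1) with h | h
    · rw [← h, hfa']
    · exact hfq x ⟨h, hx.2.2⟩
  have := h1.union h2
  rwa [Iio_union_Ici, hasDerivWithinAt_univ] at this

private lemma hdP1 (x : ℝ) : HasDerivAt (fun s : ℝ => 6 * s ^ 2 + 20 * s + 17) (12 * x + 20) x := by
  have := (((hasDerivAt_pow 2 x).const_mul 6).add ((hasDerivAt_id x).const_mul 20)).add_const 17
  refine this.congr_deriv ?_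
  try simp only [id_eq]
  push_cast
  ring

private lemma hdP2 (x : ℝ) : HasDerivAt (fun s : ℝ => (s + 1) ^ 4) (4 * (x + 1) ^ 3) x := by
  have := ((hasDerivAt_id x).add_const 1).pow 4
  refine this.congr_deriv ?_
  try simp only [id_eq]
  push_cast
  ring

private lemma hdP3 (x : ℝ) : HasDerivAt (fun s : ℝ => (s - 1) ^ 4) (4 * (x - 1) ^ 3) x := by
  have := ((hasDerivAt_id x).sub_const 1).pow 4
  refine this.congr_deriv ?_
  try simp only [id_eq]
  push_cast
  ring

private lemma hdP4 (x : ℝ) : HasDerivAt (fun s : ℝ => 6 * s ^ 2 - 20 * s + 17) (12 * x - 20) x := by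
  have := (((hasDerivAt_pow 2 x).const_mul 6).sub ((hasDerivAt_id x).const_mul 20)).add_const 17
  refine this.congr_deriv ?_
  try simp only [id_eq]
  push_cast
  ring

private lemma hdQ2 (x : ℝ) : HasDerivAt (fun s : ℝ => 4 * (s + 1) ^ 3) (12 * (x + 1) ^ 2) x := by
  have := (((hasDerivAt_id x).add_const 1).pow 3).const_mul 4
  refine this.congr_deriv ?_
  try simp only [id_eq]
  push_cast
  ring

private lemma hdQ3 (x : ℝ) : HasDerivAt (fun s : ℝ => 4 * (s - 1) ^ 3) (12 * (x - 1) ^ 2) x := by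
  have := (((hasDerivAt_id x).sub_const 1).pow 3).const_mul 4
  refine this.congr_deriv ?_
  try simp only [id_eq]
  push_cast
  ring

private lemma hdQ1 (x : ℝ) : HasDerivAt (fun s : ℝ => 12 * s + 20) (12 : ℝ) x := by
  have := ((hasDerivAt_id x).const_mul 12).add_const 20
  refine this.congr_deriv ?_
  try simp only [id_eq]
  ring

private lemma hdQ4 (x : ℝ) : HasDerivAt (fun s : ℝ => 12 * s - 20) (12 : ℝ) x := by
  have := ((hasDerivAt_id x).const_mul 12).sub_const 20
  refine this.congr_deriv ?_
  try simp only [id_eq]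
  ring

private lemma hasDerivAt_J (s : ℝ) : HasDerivAt obstacleApprox (obstacleApprox' s) s := by
  have E : ∀ g : ℝ → ℝ, (∀ x, obstacleApprox x = g x) → True := fun _ _ => trivial
  rcases lt_trichotomy s (-2) with h | h | h
  · rw [obstacleApprox', if_pos h.le]
    refine loc (show s - 1 < s by linarith) (show s < -2 by linarith) (hdP1 s) ?_
    intro x ⟨hx1, hx2⟩
    simp only [obstacleApprox]; split_ifs <;> first | rfl | linarith
  · subst h
    have hv : obstacleApprox' (-2) = -4 := by norm_num [obstacleApprox']
    rw [hv]
    refine glue (show (-3 : ℝ) < -2 by norm_num) (show (-2 : ℝ) < -1 by norm_num)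
      (by convert hdP1 (-2) using 1; norm_num)
      (by have := hdP2 (-2); norm_num at this; exact this) ?_ ?_ ?_ ?_
    · intro x ⟨hx1, hx2⟩
      simp only [obstacleApprox]; split_ifs <;> first | rfl | linarith
    · intro x ⟨hx1, hx2⟩
      simp only [obstacleApprox]; split_ifs <;> first | rfl | linarith
    · norm_num [obstacleApprox]
    · norm_num [obstacleApprox]
  · rcases lt_trichotomy s (-1) with h1 | h1 | h1
    · rw [obstacleApprox', if_neg (by linarith), if_pos h1]
      refine loc h h1 (hdP2 s) ?_
      intro x ⟨hx1, hx2⟩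
      simp only [obstacleApprox]; split_ifs <;> first | rfl | linarith
    · subst h1
      have hv : obstacleApprox' (-1) = 0 := by norm_num [obstacleApprox']
      rw [hv]
      refine glue (show (-2 : ℝ) < -1 by norm_num) (show (-1 : ℝ) < 1 by norm_num)
        (by have := hdP2 (-1); norm_num at this; exact this)
        (hasDerivAt_const (-1 : ℝ) (0 : ℝ)) ?_ ?_ ?_ ?_
      · intro x ⟨hx1, hx2⟩
        simp only [obstacleApprox]; split_ifs <;> first | rfl | linarith
      · intro x ⟨hx1, hx2⟩
        simp only [obstacleApprox]; split_ifs <;> first | rfl | linarith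
      · norm_num [obstacleApprox]
      · norm_num [obstacleApprox]
    · rcases lt_trichotomy s 1 with h2 | h2 | h2
      · rw [obstacleApprox', if_neg (by linarith), if_neg (not_lt.mpr h1.le), if_pos h2.le]
        refine loc h1 h2 (hasDerivAt_const s (0 : ℝ)) ?_
        intro x ⟨hx1, hx2⟩
        simp only [obstacleApprox]; split_ifs <;> first | rfl | linarith
      · subst h2
        have hv : obstacleApprox' 1 = 0 := by norm_num [obstacleApprox']
        rw [hv]
        refine glue (show (-1 : ℝ) < 1 by norm_num) (show (1 : ℝ) < 2 by norm_num)
          (hasDerivAt_const (1 : ℝ) (0 : ℝ))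
          (by have := hdP3 1; norm_num at this; exact this) ?_ ?_ ?_ ?_
        · intro x ⟨hx1, hx2⟩
          simp only [obstacleApprox]; split_ifs <;> first | rfl | linarith
        · intro x ⟨hx1, hx2⟩
          simp only [obstacleApprox]; split_ifs <;> first | rfl | linarith
        · norm_num [obstacleApprox]
        · norm_num [obstacleApprox]
      · rcases lt_trichotomy s 2 with h3 | h3 | h3
        · rw [obstacleApprox', if_neg (by linarith), if_neg (by push_neg; linarith),
            if_neg (not_le.mpr h2), if_pos h3]
          refine loc h2 h3 (hdP3 s) ?_
          intro x ⟨hx1, hx2⟩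
          simp only [obstacleApprox]; split_ifs <;> first | rfl | linarith
        · subst h3
          have hv : obstacleApprox' 2 = 4 := by norm_num [obstacleApprox']
          rw [hv]
          refine glue (show (1 : ℝ) < 2 by norm_num) (show (2 : ℝ) < 3 by norm_num)
            (by have := hdP3 2; norm_num at this; exact this)
            (by convert hdP4 2 using 1; norm_num) ?_ ?_ ?_ ?_
          · intro x ⟨hx1, hx2⟩
            simp only [obstacleApprox]; split_ifs <;> first | rfl | linarith
          · intro x ⟨hx1, hx2⟩
            simp only [obstacleApprox]; split_ifs <;> first | rfl | linarith
          · norm_num [obstacleApprox]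
          · norm_num [obstacleApprox]
        · rw [obstacleApprox', if_neg (by linarith), if_neg (by push_neg; linarith),
            if_neg (by push_neg; linarith), if_neg (not_lt.mpr h3.le)]
          refine loc h3 (show s < s + 1 by linarith) (hdP4 s) ?_
          intro x ⟨hx1, hx2⟩
          simp only [obstacleApprox]; split_ifs <;> first | rfl | linarith

private lemma hasDerivAt_J' (s : ℝ) : HasDerivAt obstacleApprox' (obstacleApprox'' s) s := by
  rcases lt_trichotomy s (-2) with h | h | h
  · rw [obstacleApprox'', if_pos h.le]
    refine loc (show s - 1 < s by linarith) (show s < -2 by linarith) (hdQ1 s) ?_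
    intro x ⟨hx1, hx2⟩
    simp only [obstacleApprox']; split_ifs <;> first | rfl | linarith
  · subst h
    have hv : obstacleApprox'' (-2) = 12 := by norm_num [obstacleApprox'']
    rw [hv]
    refine glue (show (-3 : ℝ) < -2 by norm_num) (show (-2 : ℝ) < -1 by norm_num)
      (hdQ1 (-2))
      (by have := hdQ2 (-2); norm_num at this; exact this) ?_ ?_ ?_ ?_
    · intro x ⟨hx1, hx2⟩
      simp only [obstacleApprox']; split_ifs <;> first | rfl | linarith
    · intro x ⟨hx1, hx2⟩
      simp only [obstacleApprox']; split_ifs <;> first | rfl | linarith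
    · norm_num [obstacleApprox']
    · norm_num [obstacleApprox']
  · rcases lt_trichotomy s (-1) with h1 | h1 | h1
    · rw [obstacleApprox'', if_neg (by linarith), if_pos h1]
      refine loc h h1 (hdQ2 s) ?_
      intro x ⟨hx1, hx2⟩
      simp only [obstacleApprox']; split_ifs <;> first | rfl | linarith
    · subst h1
      have hv : obstacleApprox'' (-1) = 0 := by norm_num [obstacleApprox'']
      rw [hv]
      refine glue (show (-2 : ℝ) < -1 by norm_num) (show (-1 : ℝ) < 1 by norm_num)
        (by have := hdQ2 (-1); norm_num at this; exact this)
        (hasDerivAt_const (-1 : ℝ) (0 : ℝ)) ?_ ?_ ?_ ?_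
      · intro x ⟨hx1, hx2⟩
        simp only [obstacleApprox']; split_ifs <;> first | rfl | linarith
      · intro x ⟨hx1, hx2⟩
        simp only [obstacleApprox']; split_ifs <;> first | rfl | linarith
      · norm_num [obstacleApprox']
      · norm_num [obstacleApprox']
    · rcases lt_trichotomy s 1 with h2 | h2 | h2
      · rw [obstacleApprox'', if_neg (by linarith), if_neg (not_lt.mpr h1.le), if_pos h2.le]
        refine loc h1 h2 (hasDerivAt_const s (0 : ℝ)) ?_
        intro x ⟨hx1, hx2⟩
        simp only [obstacleApprox']; split_ifs <;> first | rfl | linarith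
      · subst h2
        have hv : obstacleApprox'' 1 = 0 := by norm_num [obstacleApprox'']
        rw [hv]
        refine glue (show (-1 : ℝ) < 1 by norm_num) (show (1 : ℝ) < 2 by norm_num)
          (hasDerivAt_const (1 : ℝ) (0 : ℝ))
          (by have := hdQ3 1; norm_num at this; exact this) ?_ ?_ ?_ ?_
        · intro x ⟨hx1, hx2⟩
          simp only [obstacleApprox']; split_ifs <;> first | rfl | linarith
        · intro x ⟨hx1, hx2⟩
          simp only [obstacleApprox']; split_ifs <;> first | rfl | linarith
        · norm_num [obstacleApprox']
        · norm_num [obstacleApprox']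
      · rcases lt_trichotomy s 2 with h3 | h3 | h3
        · rw [obstacleApprox'', if_neg (by linarith), if_neg (by push_neg; linarith),
            if_neg (not_le.mpr h2), if_pos h3]
          refine loc h2 h3 (hdQ3 s) ?_
          intro x ⟨hx1, hx2⟩
          simp only [obstacleApprox']; split_ifs <;> first | rfl | linarith
        · subst h3
          have hv : obstacleApprox'' 2 = 12 := by norm_num [obstacleApprox'']
          rw [hv]
          refine glue (show (1 : ℝ) < 2 by norm_num) (show (2 : ℝ) < 3 by norm_num)
            (by have := hdQ3 2; norm_num at this; exact this)
            (hdQ4 2) ?_ ?_ ?_ ?_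
          · intro x ⟨hx1, hx2⟩
            simp only [obstacleApprox']; split_ifs <;> first | rfl | linarith
          · intro x ⟨hx1, hx2⟩
            simp only [obstacleApprox']; split_ifs <;> first | rfl | linarith
          · norm_num [obstacleApprox']
          · norm_num [obstacleApprox']
        · rw [obstacleApprox'', if_neg (by linarith), if_neg (by push_neg; linarith),
            if_neg (by push_neg; linarith), if_neg (not_lt.mpr h3.le)]
          refine loc h3 (show s < s + 1 by linarith) (hdQ4 s) ?_
          intro x ⟨hx1, hx2⟩
          simp only [obstacleApprox']; split_ifs <;> first | rfl | linarith

private lemma deriv_J : deriv obstacleApprox = obstacleApprox' :=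
  funext fun s => (hasDerivAt_J s).deriv

private lemma deriv_J' : deriv obstacleApprox' = obstacleApprox'' :=
  funext fun s => (hasDerivAt_J' s).deriv


private lemma locC {f p : ℝ → ℝ} {a b c : ℝ} (hb : b < a) (hc : a < c)
    (hp : ContinuousAt p a) (hfp : ∀ x ∈ Set.Ioo b c, f x = p x) : ContinuousAt f a := by
  apply hp.congr
  filter_upwards [Ioo_mem_nhds hb hc] with x hx using (hfp x hx).symm

private lemma glueC {f p q : ℝ → ℝ} {a b c : ℝ} (hb : b < a) (hc : a < c)
    (hp : ContinuousAt p a) (hq : ContinuousAt q a)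
    (hfp : ∀ x ∈ Set.Ioo b a, f x = p x) (hfq : ∀ x ∈ Set.Ioo a c, f x = q x)
    (hfa : f a = p a) (hfa' : f a = q a) : ContinuousAt f a := by
  have h1 : ContinuousWithinAt f (Iio a) a := by
    apply (hp.continuousWithinAt).congr_of_eventuallyEq _ hfa
    filter_upwards [inter_mem_nhdsWithin (Iio a) (Ioo_mem_nhds hb hc)] with x hx
    exact hfp x ⟨hx.2.1, hx.1⟩
  have h2 : ContinuousWithinAt f (Ici a) a := by
    apply (hq.continuousWithinAt).congr_of_eventuallyEq _ hfa'
    filter_upwards [inter_mem_nhdsWithin (Ici a) (Ioo_mem_nhds hb hc)] with x hx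
    rcases eq_or_lt_of_le (mem_Ici.mp hx.1) with h | h
    · rw [← h, hfa']
    · exact hfq x ⟨h, hx.2.2⟩
  have := h1.union h2
  rwa [Iio_union_Ici, continuousWithinAt_univ] at this

private lemma cont_J'' : Continuous obstacleApprox'' := by
  rw [continuous_iff_continuousAt]
  intro s
  rcases lt_trichotomy s (-2) with h | h | h
  · refine locC (show s - 1 < s by linarith) h (continuousAt_const (y := (12 : ℝ))) ?_
    intro x ⟨hx1, hx2⟩
    simp only [obstacleApprox'']; split_ifs <;> first | rfl | linarith
  · subst h
    refine glueC (show (-3 : ℝ) < -2 by norm_num) (show (-2 : ℝ) < -1 by norm_num)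
      (continuousAt_const (y := (12 : ℝ)))
      (by fun_prop : ContinuousAt (fun s : ℝ => 12 * (s + 1) ^ 2) (-2)) ?_ ?_ ?_ ?_
    · intro x ⟨hx1, hx2⟩
      simp only [obstacleApprox'']; split_ifs <;> first | rfl | linarith
    · intro x ⟨hx1, hx2⟩
      simp only [obstacleApprox'']; split_ifs <;> first | rfl | linarith
    · norm_num [obstacleApprox'']
    · norm_num [obstacleApprox'']
  · rcases lt_trichotomy s (-1) with h1 | h1 | h1
    · refine locC h h1 (by fun_prop : ContinuousAt (fun s : ℝ => 12 * (s + 1) ^ 2) s) ?_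
      intro x ⟨hx1, hx2⟩
      simp only [obstacleApprox'']; split_ifs <;> first | rfl | linarith
    · subst h1
      refine glueC (show (-2 : ℝ) < -1 by norm_num) (show (-1 : ℝ) < 1 by norm_num)
        (by fun_prop : ContinuousAt (fun s : ℝ => 12 * (s + 1) ^ 2) (-1))
        (continuousAt_const (y := (0 : ℝ))) ?_ ?_ ?_ ?_
      · intro x ⟨hx1, hx2⟩
        simp only [obstacleApprox'']; split_ifs <;> first | rfl | linarith
      · intro x ⟨hx1, hx2⟩
        simp only [obstacleApprox'']; split_ifs <;> first | rfl | linarith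
      · norm_num [obstacleApprox'']
      · norm_num [obstacleApprox'']
    · rcases lt_trichotomy s 1 with h2 | h2 | h2
      · refine locC h1 h2 (continuousAt_const (y := (0 : ℝ))) ?_
        intro x ⟨hx1, hx2⟩
        simp only [obstacleApprox'']; split_ifs <;> first | rfl | linarith
      · subst h2
        refine glueC (show (-1 : ℝ) < 1 by norm_num) (show (1 : ℝ) < 2 by norm_num)
          (continuousAt_const (y := (0 : ℝ)))
          (by fun_prop : ContinuousAt (fun s : ℝ => 12 * (s - 1) ^ 2) 1) ?_ ?_ ?_ ?_
        · intro x ⟨hx1, hx2⟩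
          simp only [obstacleApprox'']; split_ifs <;> first | rfl | linarith
        · intro x ⟨hx1, hx2⟩
          simp only [obstacleApprox'']; split_ifs <;> first | rfl | linarith
        · norm_num [obstacleApprox'']
        · norm_num [obstacleApprox'']
      · rcases lt_trichotomy s 2 with h3 | h3 | h3
        · refine locC h2 h3 (by fun_prop : ContinuousAt (fun s : ℝ => 12 * (s - 1) ^ 2) s) ?_
          intro x ⟨hx1, hx2⟩
          simp only [obstacleApprox'']; split_ifs <;> first | rfl | linarith
        · subst h3
          refine glueC (show (1 : ℝ) < 2 by norm_num) (show (2 : ℝ) < 3 by norm_num)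
            (by fun_prop : ContinuousAt (fun s : ℝ => 12 * (s - 1) ^ 2) 2)
            (continuousAt_const (y := (12 : ℝ))) ?_ ?_ ?_ ?_
          · intro x ⟨hx1, hx2⟩
            simp only [obstacleApprox'']; split_ifs <;> first | rfl | linarith
          · intro x ⟨hx1, hx2⟩
            simp only [obstacleApprox'']; split_ifs <;> first | rfl | linarith
          · norm_num [obstacleApprox'']
          · norm_num [obstacleApprox'']
        · refine locC h3 (show s < s + 1 by linarith) (continuousAt_const (y := (12 : ℝ))) ?_
          intro x ⟨hx1, hx2⟩
          simp only [obstacleApprox'']; split_ifs <;> first | rfl | linarith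

private lemma J''_bounds (s : ℝ) : 0 ≤ obstacleApprox'' s ∧ obstacleApprox'' s ≤ 12 := by
  simp only [obstacleApprox'']
  split_ifs with h1 h2 h3 h4 <;> constructor <;> nlinarith [sq_nonneg (s + 1), sq_nonneg (s - 1)]

private lemma diff_J : Differentiable ℝ obstacleApprox :=
  fun s => (hasDerivAt_J s).differentiableAt

private lemma diff_J' : Differentiable ℝ obstacleApprox' :=
  fun s => (hasDerivAt_J' s).differentiableAt

/-- The obstacle approximation function `J` is `C²`, nonnegative, convex, vanishes exactly
on `[-1, 1]`, and its second derivative satisfies `0 ≤ J'' ≤ 12`. -/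
theorem obstacle_approx_properties :
    ContDiff ℝ 2 obstacleApprox ∧
    (∀ s : ℝ, 0 ≤ obstacleApprox s) ∧
    ConvexOn ℝ Set.univ obstacleApprox ∧
    (∀ s : ℝ, obstacleApprox s = 0 ↔ (-1 ≤ s ∧ s ≤ 1)) ∧
    (∀ s : ℝ, 0 ≤ deriv (deriv obstacleApprox) s ∧ deriv (deriv obstacleApprox) s ≤ 12) := by
  have hdd : deriv (deriv obstacleApprox) = obstacleApprox'' := by
    rw [deriv_J, deriv_J']
  refine ⟨?_, ?_, ?_, ?_, ?_⟩
  · rw [show (2 : WithTop ℕ∞) = 1 + 1 from by norm_num, contDiff_succ_iff_deriv]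
    refine ⟨diff_J, by simp, ?_⟩
    rw [contDiff_one_iff_deriv, deriv_J]
    exact ⟨diff_J', by rw [deriv_J']; exact cont_J''⟩
  · intro s
    simp only [obstacleApprox]
    split_ifs with h1 h2 h3 h4
    · nlinarith [sq_nonneg (s + 2)]
    · positivity
    · exact le_refl _
    · positivity
    · nlinarith [sq_nonneg (s - 2)]
  · refine convexOn_of_deriv2_nonneg convex_univ diff_J.continuous.continuousOn
      (diff_J.differentiableOn) ?_ ?_
    · rw [interior_univ, deriv_J]; exact diff_J'.differentiableOn
    · intro x _
      have : deriv^[2] obstacleApprox x = obstacleApprox'' x := by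
        show deriv (deriv^[1] obstacleApprox) x = _
        rw [Function.iterate_one, deriv_J, deriv_J']
      rw [this]
      exact (J''_bounds x).1
  · intro s
    constructor
    · intro h
      constructor
      · by_contra hc
        push_neg at hc
        simp only [obstacleApprox] at h
        split_ifs at h with h1 h2 h3 h4
        all_goals first
          | linarith
          | nlinarith [sq_nonneg (s + 2), sq_nonneg (s - 2)]
          | exact pow_ne_zero 4 (show s + 1 ≠ 0 from fun h0 => by linarith) h
          | exact pow_ne_zero 4 (show s - 1 ≠ 0 from fun h0 => by linarith) h
      · by_contra hc
        push_neg at hc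
        simp only [obstacleApprox] at h
        split_ifs at h with h1 h2 h3 h4
        all_goals first
          | linarith
          | nlinarith [sq_nonneg (s + 2), sq_nonneg (s - 2)]
          | exact pow_ne_zero 4 (show s + 1 ≠ 0 from fun h0 => by linarith) h
          | exact pow_ne_zero 4 (show s - 1 ≠ 0 from fun h0 => by linarith) h
    · rintro ⟨ha, hb⟩
      simp only [obstacleApprox]
      split_ifs <;> first | rfl | linarith
  · intro s
    rw [hdd]
    exact J''_bounds s
end

section
/- Let c₀ ≥ 0 and let F : ℝ → ℝ be a differentiable function with F ≥ 0 such that the map s ↦ F(s) + ½ c₀ s² is convex. Then for all φ, λ ∈ ℝ the inequality F'(φ)(λ − φ) ≤ F(λ) + (3/2) c₀ φ² + c₀ λ² holds. -/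
/-- If `F ≥ 0` is differentiable and `s ↦ F(s) + ½c₀s²` is convex (with `c₀ ≥ 0`), then
`F'(φ)(λ - φ) ≤ F(λ) + (3/2)c₀φ² + c₀λ²` for all `φ, λ`. -/
theorem potential_derivative_estimate
    (c₀ : ℝ) (hc₀ : 0 ≤ c₀)
    (F : ℝ → ℝ) (hdiff : Differentiable ℝ F) (hnonneg : ∀ s : ℝ, 0 ≤ F s)
    (hconv : ConvexOn ℝ Set.univ (fun s : ℝ => F s + (1 / 2) * c₀ * s ^ 2)) :
    ∀ φ l : ℝ, deriv F φ * (l - φ) ≤ F l + (3 / 2) * c₀ * φ ^ 2 + c₀ * l ^ 2 := by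
  intro φ l
  set G : ℝ → ℝ := fun s => F s + (1 / 2) * c₀ * s ^ 2 with hG
  have hGdiff : Differentiable ℝ G := by
    apply hdiff.add
    fun_prop
  have hderivG : ∀ x : ℝ, deriv G x = deriv F x + c₀ * x := by
    intro x
    have h1 : HasDerivAt (fun s : ℝ => (1 / 2) * c₀ * s ^ 2) ((1/2) * c₀ * (2 * x)) x := by
      simpa using ((hasDerivAt_pow 2 x).const_mul ((1/2) * c₀))
    have h2 : HasDerivAt G (deriv F x + (1/2) * c₀ * (2 * x)) x :=
      (hdiff x).hasDerivAt.add h1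
    rw [h2.deriv]; ring
  -- subgradient inequality for G
  have key : deriv G φ * (l - φ) ≤ G l - G φ := by
    rcases lt_trichotomy φ l with h | h | h
    · have := hconv.deriv_le_slope (Set.mem_univ φ) (Set.mem_univ l) h
        (hGdiff φ)
      rw [slope_def_field] at this
      have hpos : (0:ℝ) < l - φ := by linarith
      calc deriv G φ * (l - φ) ≤ (G l - G φ) / (l - φ) * (l - φ) := by
            apply mul_le_mul_of_nonneg_right _ hpos.le
            simpa [div_eq_iff hpos.ne'] using this
        _ = G l - G φ := by field_simp
    · simp [h]
    · have := hconv.slope_le_deriv (Set.mem_univ l) (Set.mem_univ φ) h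
        (hGdiff φ)
      rw [slope_def_field] at this
      have hpos : (0:ℝ) < φ - l := by linarith
      have : G φ - G l ≤ deriv G φ * (φ - l) := by
        have := mul_le_mul_of_nonneg_right this hpos.le
        rwa [div_mul_cancel₀] at this
        exact hpos.ne'
      nlinarith
  have hF : deriv F φ * (l - φ) ≤ F l + (1/2) * c₀ * l ^ 2 + (1/2) * c₀ * φ ^ 2 - c₀ * φ * l := by
    have hFφ := hnonneg φ
    rw [hderivG φ] at key
    simp only [hG] at key
    nlinarith
  nlinarith [sq_nonneg (φ + l), sq_nonneg (φ - l), mul_nonneg hc₀ (sq_nonneg φ), mul_nonneg hc₀ (sq_nonneg l)]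
end
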